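/- Let π : M → U(H) be a unitary representation, θ : Ξ → Lie(M) linear, and define π^⋉(m₁,m₂)T = π(m₁m₂)Tπ(m₁)⁻¹ on Hilbert–Schmidt operators. Suppose exp_{M⋉M}(X,Y) = (exp_M X, exp_M(−X)exp_M(X+Y)) for the group square. Then for all φ₁,φ₂,f₁,f₂ ∈ H and X,Y ∈ Ξ: A^{π^⋉,θ×θ}_{φ₁⊗φ̄₂}(f₁⊗f̄₂)(X,Y) = A^{π,θ}_{φ₁}f₁(X+Y) · conj(A^{π,θ}_{φ₂}f₂(X)). -/

import Mathlib

/-- Rank-one operator `f ⊗ φ̄ : h ↦ ⟨h, φ⟩ f`. -/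
noncomputable def rankOneOp {H : Type*} [NormedAddCommGroup H] [InnerProductSpace ℂ H]
    (f φ : H) : H → H := fun h => (inner ℂ φ h : ℂ) • f

/-- Hilbert–Schmidt inner product `⟨S, T⟩_HS = ∑ᵢ ⟪S eᵢ, T eᵢ⟫`. -/
noncomputable def hsInner {H : Type*} [NormedAddCommGroup H] [InnerProductSpace ℂ H]
    [CompleteSpace H] {ι : Type*} (b : HilbertBasis ι ℂ H) (S T : H → H) : ℂ :=
  ∑' i, (inner ℂ (S (b i)) (T (b i)) : ℂ)

/-- The action `π^⋉(m₁,m₂) T = π(m₁m₂) ∘ T ∘ π(m₁)⁻¹` on operators. -/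
def piLtimes {M : Type*} [Group M] {H : Type*} [NormedAddCommGroup H]
    [InnerProductSpace ℂ H] (π : M →* (H ≃ₗᵢ[ℂ] H)) (m : M × M) (T : H → H) : H → H :=
  fun h => π (m.1 * m.2) (T ((π m.1).symm h))

/-- The ambiguity function `A_φ f (X) = ⟨f, π(e(X))φ)⟩`. -/
noncomputable def ambiguity {M H : Type*} [Group M] [NormedAddCommGroup H]
    [InnerProductSpace ℂ H] {d : ℕ} (π : M →* (H ≃ₗᵢ[ℂ] H))
    (e : (Fin d → ℝ) → M) (φ f : H) : (Fin d → ℝ) → ℂ :=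
  fun X => (inner ℂ (π (e X) φ) f : ℂ)

/-- Ambiguity function of `π^⋉` along `θ × θ` on rank-one operators. With
`exp_{M⋉M}(X,Y) = (exp_M X, exp_M(−X) exp_M(X+Y))`, i.e. the group-square element
`(e(X), e(X)⁻¹ e(X+Y))`:
`A^{π^⋉,θ×θ}_{φ₁⊗φ̄₂}(f₁⊗f̄₂)(X,Y) = A^{π,θ}_{φ₁}f₁(X+Y) · conj (A^{π,θ}_{φ₂}f₂(X))`. -/
theorem ambiguity_piLtimes_rankOne {M H : Type*} [Group M] [NormedAddCommGroup H]
    [InnerProductSpace ℂ H] [CompleteSpace H] {ι : Type*} (b : HilbertBasis ι ℂ H)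
    {d : ℕ} (π : M →* (H ≃ₗᵢ[ℂ] H)) (e : (Fin d → ℝ) → M) :
    ∀ (φ₁ φ₂ f₁ f₂ : H) (X Y : Fin d → ℝ),
      hsInner b
          (piLtimes π (e X, (e X)⁻¹ * e (X + Y)) (rankOneOp φ₁ φ₂))
          (rankOneOp f₁ f₂)
        = ambiguity π e φ₁ f₁ (X + Y) * (starRingEnd ℂ) (ambiguity π e φ₂ f₂ X) := by
  intro φ₁ φ₂ f₁ f₂ X Y
  have key : ∀ i : ι,
      (inner ℂ ((piLtimes π (e X, (e X)⁻¹ * e (X + Y)) (rankOneOp φ₁ φ₂)) (b i))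
        ((rankOneOp f₁ f₂) (b i)) : ℂ)
      = (inner ℂ (π (e (X + Y)) φ₁) f₁ : ℂ) *
          ((inner ℂ (f₂ : H) (b i) : ℂ) * (inner ℂ (b i) (π (e X) φ₂) : ℂ)) := by
    intro i
    have h1 : (inner ℂ (φ₂ : H) ((π (e X)).symm (b i)) : ℂ)
        = inner ℂ (π (e X) φ₂) (b i) := by
      rw [← (π (e X)).inner_map_map φ₂ ((π (e X)).symm (b i)),
        (π (e X)).apply_symm_apply]
    simp only [piLtimes, rankOneOp, map_smul, h1, mul_inv_cancel_left,
      inner_smul_left, inner_smul_right, RingHom.id_apply]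
    rw [← inner_conj_symm (b i) (π (e X) φ₂)]
    ring
  unfold hsInner
  rw [tsum_congr key, tsum_mul_left, HilbertBasis.tsum_inner_mul_inner]
  simp only [ambiguity]
  rw [← inner_conj_symm f₂ (π (e X) φ₂)]
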